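/- arXiv:1706.06401 — 2 statements merged into one kernel-verified Lean document; each statement's English description precedes it below -/
import Mathlib

section
/- Let g be a finite-dimensional real Lie algebra, k ⊆ g a subalgebra, m ⊆ g a complement with a symplectic form σ and compatible complex structure H satisfying the cocycle condition σ([X,Y]_m,Z)+σ([Y,Z]_m,X)+σ([Z,X]_m,Y)=0. Extend H to g by H(k) = 0. If e₁,…,e₂ₙ is a unitary basis of m (i.e. {e_i, He_i} is a symplectic basis), then for every X ∈ m, tr(ad_X) = σ(X, ξ_m), where ξ = Σᵢ[eᵢ, Heᵢ] and ξ_m is its m-component. -/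
/-- For a homogeneous almost-Kähler structure determined by (g, k, m, σ, H)
with σ closed, and a unitary basis e₁,…,eₙ of m (so that {eᵢ, Heᵢ} is a
symplectic basis), one has tr(ad_X) = σ(X, ξ_m) for every X ∈ m, where
ξ = Σᵢ [eᵢ, Heᵢ] and ξ_m is its m-component. -/
theorem stmt_8 (g : Type*) [LieRing g] [LieAlgebra ℝ g] [FiniteDimensional ℝ g]
    (k : LieSubalgebra ℝ g) (m : Submodule ℝ g)
    (hcompl : IsCompl k.toSubmodule m)
    (hkm : ∀ Z ∈ k, ∀ X ∈ m, ⁅Z, X⁆ ∈ m)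
    (π : g →ₗ[ℝ] m) (hπm : ∀ X : m, π (X : g) = X) (hπk : ∀ X ∈ k, π X = 0)
    (σ : m →ₗ[ℝ] m →ₗ[ℝ] ℝ) (H : m →ₗ[ℝ] m)
    (hH : ∀ X : m, H (H X) = -X)
    (hcomp : ∀ X Y : m, σ (H X) (H Y) = σ X Y)
    (hpos : ∀ X : m, X ≠ 0 → 0 < σ X (H X))
    (hco : ∀ X Y Z : m, σ (π ⁅(X : g), (Y : g)⁆) Z + σ (π ⁅(Y : g), (Z : g)⁆) X
      + σ (π ⁅(Z : g), (X : g)⁆) Y = 0)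
    (n : ℕ) (e : Fin n → m)
    (hsymp1 : ∀ i j, σ (e i) (H (e j)) = if i = j then 1 else 0)
    (hsymp2 : ∀ i j, σ (e i) (e j) = 0)
    (hsymp3 : ∀ i j, σ (H (e i)) (H (e j)) = 0)
    (hbasis : Submodule.span ℝ
      (Set.range (Sum.elim e (fun i => H (e i)) : Fin n ⊕ Fin n → m)) = ⊤) :
    ∀ X : m, LinearMap.trace ℝ g ((LieAlgebra.ad ℝ g) (X : g))
      = σ X (π (∑ i : Fin n, ⁅((e i : m) : g), ((H (e i) : m) : g)⁆)) := by
  classical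
  set v : Fin n ⊕ Fin n → m := Sum.elim e (fun i => H (e i)) with hv
  have hskew : ∀ u w : m, σ (H u) w = - σ u (H w) := by
    intro u w
    have h1 := hcomp (H u) w
    rw [hH] at h1
    simp only [map_neg, LinearMap.neg_apply] at h1
    linarith
  have hHe_e : ∀ i j, σ (H (e i)) (e j) = - if i = j then (1:ℝ) else 0 := by
    intro i j
    rw [hskew, hsymp1]
  -- antisymmetry of σ
  have hanti : ∀ u w : m, σ u w = - σ w u := by
    have hgen : ∀ s t, σ (v s) (v t) + σ (v t) (v s) = 0 := by
      intro s t
      cases s with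
      | inl i => cases t with
        | inl j => simp [hv, hsymp2]
        | inr j => simp [hv, hsymp1, hHe_e, eq_comm]
      | inr i => cases t with
        | inl j => simp [hv, hsymp1, hHe_e, eq_comm]
        | inr j => simp [hv, hsymp3]
    have hB : (σ + σ.flip) = 0 := by
      apply LinearMap.ext_on_range hbasis
      intro s
      apply LinearMap.ext_on_range hbasis
      intro t
      simpa using hgen s t
    intro u w
    have := LinearMap.congr_fun (LinearMap.congr_fun hB u) w
    simp only [LinearMap.add_apply, LinearMap.flip_apply, LinearMap.zero_apply] at this
    linarith
  -- expansion coefficients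
  have hσsum : ∀ (c : Fin n ⊕ Fin n → ℝ) (w : m),
      σ (∑ s, c s • v s) w = ∑ i, c (.inl i) * σ (e i) w
        + ∑ i, c (.inr i) * σ (H (e i)) w := by
    intro c w
    rw [map_sum, Fintype.sum_sum_type]
    simp [hv, LinearMap.smul_apply]
  -- linear independence
  have hind : LinearIndependent ℝ v := by
    rw [Fintype.linearIndependent_iff]
    intro c hc s
    have h1 : ∀ w : m, σ (∑ s, c s • v s) w = 0 := by
      intro w; rw [hc]; simp
    cases s with
    | inl j =>
      have := h1 (H (e j))
      rw [hσsum] at this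
      simpa [hsymp1, hsymp3, Finset.sum_ite_eq'] using this
    | inr j =>
      have := h1 (e j)
      rw [hσsum] at this
      simp [hsymp2, hHe_e, Finset.sum_ite_eq'] at this
      linarith
  let b : Module.Basis (Fin n ⊕ Fin n) ℝ m := Module.Basis.mk hind (by rw [hbasis])
  have hb : ∀ s, b s = v s := fun s => Module.Basis.mk_apply hind _ s
  -- repr formulas
  have hrepr : ∀ y : m, ∀ j,
      b.repr y (.inl j) = σ y (H (e j)) ∧ b.repr y (.inr j) = - σ y (e j) := by
    intro y j
    have hy : (∑ s, b.repr y s • v s) = y := by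
      conv_rhs => rw [← b.sum_repr y]
      exact Finset.sum_congr rfl fun s _ => by rw [hb]
    constructor
    · have := congrArg (fun z => σ z (H (e j))) hy
      rw [hσsum] at this
      simp [hsymp1, hsymp3, Finset.sum_ite_eq'] at this
      linarith
    · have := congrArg (fun z => σ z (e j)) hy
      rw [hσsum] at this
      simp [hsymp2, hHe_e, Finset.sum_ite_eq'] at this
      linarith
  intro X
  set f : g →ₗ[ℝ] g := (LieAlgebra.ad ℝ g) (X : g) with hf
  set q : g →ₗ[ℝ] g := m.subtype ∘ₗ π with hqdef
  have hπs : π ∘ₗ m.subtype = LinearMap.id := LinearMap.ext hπm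
  have hqq : q ∘ₗ q = q := by
    rw [hqdef, LinearMap.comp_assoc, ← LinearMap.comp_assoc π, hπs,
      LinearMap.id_comp]
  set p : g →ₗ[ℝ] g := LinearMap.id - q with hpdef
  have hpk : ∀ w : g, p w ∈ k := by
    intro w
    have hw : w ∈ k.toSubmodule ⊔ m := by rw [hcompl.sup_eq_top]; trivial
    obtain ⟨a, ha, c, hc, rfl⟩ := Submodule.mem_sup.mp hw
    have : π (a + c) = ⟨c, hc⟩ := by
      rw [map_add, hπk a ha, hπm ⟨c, hc⟩]; simp
    simp only [hpdef, LinearMap.sub_apply, LinearMap.id_apply, hqdef,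
      LinearMap.comp_apply, this]
    simpa using ha
  have hπmem : ∀ (w : g), w ∈ m → ((π w : m) : g) = w := by
    intro w hw
    have := hπm ⟨w, hw⟩
    simpa using congrArg (Subtype.val) this
  have hfp_mem : ∀ w : g, f (p w) ∈ m := by
    intro w
    have h1 : ⁅p w, (X : g)⁆ ∈ m := hkm _ (hpk w) _ X.2
    have h2 : f (p w) = -⁅p w, (X : g)⁆ := by
      rw [hf, LieAlgebra.ad_apply]; exact (lie_skew _ _).symm
    rw [h2]; exact neg_mem h1
  have hpfp : p ∘ₗ f ∘ₗ p = 0 := by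
    apply LinearMap.ext
    intro w
    show p (f (p w)) = 0
    have h1 : q (f (p w)) = f (p w) := hπmem _ (hfp_mem w)
    have h2 : p (f (p w)) = f (p w) - q (f (p w)) := rfl
    rw [h2, h1, sub_self]
  have hqp : q ∘ₗ p = 0 := by
    rw [hpdef, LinearMap.comp_sub, LinearMap.comp_id, hqq, sub_self]
  have hpq : p ∘ₗ q = 0 := by
    rw [hpdef, LinearMap.sub_comp, LinearMap.id_comp, hqq, sub_self]
  have hid : p + q = LinearMap.id := by rw [hpdef, sub_add_cancel]
  set A : m →ₗ[ℝ] m := π ∘ₗ f ∘ₗ m.subtype with hA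
  -- trace reduction
  have htr : LinearMap.trace ℝ g f = LinearMap.trace ℝ m A := by
    have t1 : LinearMap.trace ℝ g (p ∘ₗ f ∘ₗ q) = 0 := by
      have e1 : p ∘ₗ f ∘ₗ q = p * (f * q) := rfl
      rw [e1, LinearMap.trace_mul_comm, mul_assoc,
        show q * p = (0 : Module.End ℝ g) from hqp, mul_zero, map_zero]
    have t2 : LinearMap.trace ℝ g (q ∘ₗ f ∘ₗ p) = 0 := by
      have e1 : q ∘ₗ f ∘ₗ p = q * (f * p) := rfl
      rw [e1, LinearMap.trace_mul_comm, mul_assoc,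
        show p * q = (0 : Module.End ℝ g) from hpq, mul_zero, map_zero]
    have t3 : LinearMap.trace ℝ g (q ∘ₗ f ∘ₗ q) = LinearMap.trace ℝ m A := by
      have e1 : q ∘ₗ f ∘ₗ q = m.subtype ∘ₗ (A ∘ₗ π) := by
        rw [hA, hqdef]
        ext w; rfl
      rw [e1, LinearMap.trace_comp_comm', LinearMap.comp_assoc, hπs,
        LinearMap.comp_id]
    have expand : LinearMap.trace ℝ g f
        = LinearMap.trace ℝ g (p ∘ₗ f ∘ₗ p) + LinearMap.trace ℝ g (p ∘ₗ f ∘ₗ q)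
        + LinearMap.trace ℝ g (q ∘ₗ f ∘ₗ p) + LinearMap.trace ℝ g (q ∘ₗ f ∘ₗ q) := by
      conv_lhs => rw [show f = (p + q) ∘ₗ f ∘ₗ (p + q) by
        rw [hid, LinearMap.id_comp, LinearMap.comp_id]]
      simp only [LinearMap.add_comp, LinearMap.comp_add, map_add]
      ring
    rw [expand, hpfp, map_zero, t1, t2, t3]
    ring
  rw [htr]
  -- compute the trace of A in the basis b
  have htrA : LinearMap.trace ℝ m A = ∑ s, b.repr (A (b s)) s := by
    rw [LinearMap.trace_eq_matrix_trace ℝ b A]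
    simp [Matrix.trace, Matrix.diag, LinearMap.toMatrix_apply]
  rw [htrA, Fintype.sum_sum_type]
  have hAe : ∀ j, A (b (Sum.inl j)) = π ⁅(X : g), ((e j : m) : g)⁆ := by
    intro j; rw [hb]; rfl
  have hAHe : ∀ j, A (b (Sum.inr j)) = π ⁅(X : g), ((H (e j) : m) : g)⁆ := by
    intro j; rw [hb]; rfl
  have key : ∀ j : Fin n, b.repr (A (b (Sum.inl j))) (Sum.inl j)
      + b.repr (A (b (Sum.inr j))) (Sum.inr j)
      = - σ (π ⁅((e j : m) : g), ((H (e j) : m) : g)⁆) X := by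
    intro j
    rw [hAe, hAHe, (hrepr _ j).1, (hrepr _ j).2]
    have hc := hco X (e j) (H (e j))
    have hl : (⁅((H (e j) : m) : g), (X : g)⁆ : g) = -⁅(X : g), ((H (e j) : m) : g)⁆ := by
      rw [← lie_skew]
    rw [hl, map_neg] at hc
    simp only [map_neg, LinearMap.neg_apply] at hc ⊢
    linarith
  rw [← Finset.sum_add_distrib]
  have hsum : ∑ j : Fin n, (b.repr (A (b (Sum.inl j))) (Sum.inl j)
      + b.repr (A (b (Sum.inr j))) (Sum.inr j))
      = - ∑ j : Fin n, σ (π ⁅((e j : m) : g), ((H (e j) : m) : g)⁆) X := by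
    rw [← Finset.sum_neg_distrib]
    exact Finset.sum_congr rfl fun j _ => key j
  rw [hsum, hanti X, neg_inj, map_sum, map_sum, LinearMap.sum_apply]
end

section
/- In g = so(2n,1), let V = [[J₀,0],[0,0]] where J₀ is the standard complex structure matrix on ℝ^{2n}. Let E_i = [[0,e_i],[e_iᵗ,0]] for the standard basis e_1,…,e_{2n} of ℝ^{2n}, and for 1 ≤ i < j ≤ n set P_{ij} = (1/√2)([E_i,E_j] − [E_{i+n},E_{j+n}]) and Q_{ij} = (1/√2)([E_i,E_{j+n}] + [E_{i+n},E_j]). Then V' := Σ_{i=1}^n 2[E_i, E_{i+n}] + Σ_{1≤i<j≤n} 2[P_{ij}, Q_{ij}] equals (2n−4)·V. -/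
open Matrix

/-- ℝ^{2n} indexed by Fin n ⊕ Fin n; standard complex structure J₀ sending
e_i ↦ e_{i+n} and e_{i+n} ↦ -e_i. -/
def J0mat (n : ℕ) : Matrix (Fin n ⊕ Fin n) (Fin n ⊕ Fin n) ℝ :=
  Matrix.fromBlocks 0 (-1) 1 0

/-- V = [[J₀,0],[0,0]] ∈ so(2n,1). -/
def Vmat (n : ℕ) :
    Matrix ((Fin n ⊕ Fin n) ⊕ Fin 1) ((Fin n ⊕ Fin n) ⊕ Fin 1) ℝ :=
  Matrix.fromBlocks (J0mat n) 0 0 0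

/-- E_k = [[0, e_k],[e_kᵗ, 0]] ∈ so(2n,1). -/
def Emat (n : ℕ) (k : Fin n ⊕ Fin n) :
    Matrix ((Fin n ⊕ Fin n) ⊕ Fin 1) ((Fin n ⊕ Fin n) ⊕ Fin 1) ℝ :=
  Matrix.fromBlocks 0 (Matrix.of fun a (_ : Fin 1) => if a = k then (1:ℝ) else 0)
    (Matrix.of fun (_ : Fin 1) b => if b = k then (1:ℝ) else 0) 0

lemma Emat_eq (n : ℕ) (k : Fin n ⊕ Fin n) :
    Emat n k = single (Sum.inl k) (Sum.inr 0) 1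
      + single (Sum.inr 0) (Sum.inl k) 1 := by
  ext a b
  rcases a with a | a <;> rcases b with b | b <;>
    simp [Emat, Matrix.single, fromBlocks, eq_comm, Fin.fin_one_eq_zero]

noncomputable abbrev F (n : ℕ) (k l : Fin n ⊕ Fin n) :
    Matrix ((Fin n ⊕ Fin n) ⊕ Fin 1) ((Fin n ⊕ Fin n) ⊕ Fin 1) ℝ :=
  single (Sum.inl k) (Sum.inl l) 1 - single (Sum.inl l) (Sum.inl k) 1

lemma stdmul {m : Type*} [DecidableEq m] [Fintype m] (a b c d : m) :
    (single a b (1:ℝ)) * single c d 1 =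
      if b = c then single a d 1 else 0 := by
  split
  · subst ‹b = c›; simp [Matrix.single_mul_single_same]
  · exact Matrix.single_mul_single_of_ne (h := ‹b ≠ c›) ..

lemma bracketE (n : ℕ) (k l : Fin n ⊕ Fin n) :
    ⁅Emat n k, Emat n l⁆ = F n k l := by
  rw [Ring.lie_def, Emat_eq, Emat_eq]
  simp only [add_mul, mul_add, stdmul, F]
  simp only [reduceCtorEq, if_false, Sum.inr.injEq, Sum.inl.injEq, eq_comm (a := k)]
  split <;> abel


/-- P_{ij} = (1/√2)([E_i,E_j] − [E_{i+n},E_{j+n}]). -/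
noncomputable def Pmat (n : ℕ) (i j : Fin n) :
    Matrix ((Fin n ⊕ Fin n) ⊕ Fin 1) ((Fin n ⊕ Fin n) ⊕ Fin 1) ℝ :=
  (Real.sqrt 2)⁻¹ •
    (⁅Emat n (Sum.inl i), Emat n (Sum.inl j)⁆ - ⁅Emat n (Sum.inr i), Emat n (Sum.inr j)⁆)

/-- Q_{ij} = (1/√2)([E_i,E_{j+n}] + [E_{i+n},E_j]). -/
noncomputable def Qmat (n : ℕ) (i j : Fin n) :
    Matrix ((Fin n ⊕ Fin n) ⊕ Fin 1) ((Fin n ⊕ Fin n) ⊕ Fin 1) ℝ :=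
  (Real.sqrt 2)⁻¹ •
    (⁅Emat n (Sum.inl i), Emat n (Sum.inr j)⁆ + ⁅Emat n (Sum.inr i), Emat n (Sum.inl j)⁆)

section
attribute [local instance] LieRing.ofAssociativeRing

lemma PQ (n : ℕ) (i j : Fin n) (h : i ≠ j) :
    (2:ℝ) • ⁅Pmat n i j, Qmat n i j⁆
      = (-2:ℝ) • (F n (Sum.inl i) (Sum.inr i) + F n (Sum.inl j) (Sum.inr j)) := by
  have hc : (2:ℝ) * (Real.sqrt 2)⁻¹ * (Real.sqrt 2)⁻¹ = 1 := by
    rw [mul_assoc, ← mul_inv, Real.mul_self_sqrt (by norm_num)]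
    norm_num
  rw [Pmat, Qmat, smul_lie, lie_smul, smul_smul, smul_smul, hc, one_smul,
    bracketE, bracketE, bracketE, bracketE, Ring.lie_def]
  simp only [F, sub_mul, mul_sub, add_mul, mul_add, stdmul, Sum.inl.injEq,
    Sum.inr.injEq, reduceCtorEq, if_false, if_true, h, h.symm, ite_false, if_pos rfl]
  simp only [neg_smul, two_smul, smul_add]
  abel

end

lemma sumF (n : ℕ) : ∑ i : Fin n, F n (Sum.inl i) (Sum.inr i) = (-1:ℝ) • Vmat n := by
  ext a b
  simp only [Matrix.sum_apply, Matrix.smul_apply, F, Matrix.sub_apply,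
    Matrix.single, Vmat, J0mat, Matrix.fromBlocks, Matrix.of_apply]
  rcases a with (a|a)|a <;> rcases b with (b|b)|b <;>
    simp [Finset.sum_sub_distrib, Finset.sum_ite_eq, Finset.sum_ite_eq', eq_comm] <;>
    (try (by_cases hab : a = b <;>
      simp [hab, Matrix.one_apply, Finset.filter_eq, Finset.filter_eq', and_self,
        Finset.filter_and, Finset.singleton_inter_of_notMem, Finset.mem_singleton]))


/-- V' = Σᵢ 2[Eᵢ, E_{i+n}] + Σ_{i<j} 2[P_{ij}, Q_{ij}] = (2n−4)·V in so(2n,1). -/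
theorem stmt_13 (n : ℕ) :
    (∑ i : Fin n, (2:ℝ) • ⁅Emat n (Sum.inl i), Emat n (Sum.inr i)⁆)
      + ∑ i : Fin n, ∑ j ∈ Finset.univ.filter (fun j => i < j),
          (2:ℝ) • ⁅Pmat n i j, Qmat n i j⁆
      = (2*(n:ℝ) - 4) • Vmat n := by
  set B : Fin n → _ := fun i => F n (Sum.inl i) (Sum.inr i) with hBdef
  have h1 : (∑ i : Fin n, (2:ℝ) • ⁅Emat n (Sum.inl i), Emat n (Sum.inr i)⁆)
      = (2:ℝ) • ∑ i, B i := by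
    rw [Finset.smul_sum]
    exact Finset.sum_congr rfl fun i _ => by rw [bracketE]
  have h2 : ∑ i : Fin n, ∑ j ∈ Finset.univ.filter (fun j => i < j),
        (2:ℝ) • ⁅Pmat n i j, Qmat n i j⁆
      = (-2:ℝ) • ∑ i : Fin n, ∑ j ∈ Finset.univ.filter (fun j => i < j), (B i + B j) := by
    rw [Finset.smul_sum]
    refine Finset.sum_congr rfl fun i _ => ?_
    rw [Finset.smul_sum]
    exact Finset.sum_congr rfl fun j hj =>
      PQ n i j (ne_of_lt (Finset.mem_filter.mp hj).2)
  have hswap : ∑ i : Fin n, ∑ j ∈ Finset.univ.filter (fun j => i < j), B j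
      = ∑ j : Fin n, ∑ i ∈ Finset.univ.filter (fun i => i < j), B j :=
    Finset.sum_comm' (by intro x y; simp)
  have h3 : ∑ i : Fin n, ∑ j ∈ Finset.univ.filter (fun j => i < j), (B i + B j)
      = (n - 1 : ℕ) • ∑ i, B i := by
    rw [Finset.sum_congr rfl fun i _ => Finset.sum_add_distrib, Finset.sum_add_distrib,
      hswap, Finset.smul_sum]
    rw [← Finset.sum_add_distrib]
    refine Finset.sum_congr rfl fun i _ => ?_
    rw [Finset.sum_const, Finset.sum_const, ← add_smul]
    congr 1
    have e1 : Finset.univ.filter (fun j => i < j) = Finset.Ioi i := by ext; simp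
    have e2 : Finset.univ.filter (fun j => j < i) = Finset.Iio i := by ext; simp
    rw [e1, e2, Fin.card_Ioi, Fin.card_Iio]
    omega
  rw [h1, h2, h3, sumF]
  rcases Nat.eq_zero_or_pos n with h0 | h0
  · subst h0
    have : Vmat 0 = 0 := by
      ext a b
      rcases a with (a | a) | a
      · exact a.elim0
      · exact a.elim0
      · rcases b with (b | b) | b
        · exact b.elim0
        · exact b.elim0
        · simp [Vmat, J0mat, Matrix.fromBlocks]
    simp [this]
  · have hcast : ((n - 1 : ℕ) : ℝ) = (n : ℝ) - 1 := by
      rw [Nat.cast_sub h0, Nat.cast_one]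
    rw [← Nat.cast_smul_eq_nsmul ℝ, hcast]
    simp only [smul_smul]
    rw [← add_smul]
    congr 1
    ring
end
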